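/- arXiv:2604.15473 — 5 statements merged into one kernel-verified Lean document; each statement's English description precedes it below -/
import Mathlib

section
/- Let K be a field of characteristic zero, and let v, ∂ : K → K be two derivations that commute (v ∘ ∂ = ∂ ∘ v). Let R₀ ∈ K with R₀ ≠ 0 and λ ∈ K satisfy v(R₀) = λ·R₀, let w ∈ ℚ, and let R ∈ K satisfy v(R) = w·λ·R (with w regarded as an element of K). Then the element S = ∂(R) − w·(∂(R₀)/R₀)·R satisfies v(S) = w·λ·S. That is, the covariant derivative ∇⁰_∂ = ∂ − w·∂(log R₀) maps relative invariants of weight w (relative to the reference relative invariant R₀) to relative invariants of the same weight w. -/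
/-- Bundle an additive Leibniz map on a `ℚ`-algebra field into a `Derivation ℚ K K`. -/
private def toDerAux {K : Type*} [Field K] [CharZero K] (f : K → K)
    (hadd : ∀ a b : K, f (a + b) = f a + f b)
    (hmul : ∀ a b : K, f (a * b) = f a * b + a * f b) :
    Derivation ℚ K K :=
  Derivation.mk' ((AddMonoidHom.mk' f hadd).toRatLinearMap)
    (fun a b => by
      show f (a * b) = a * f b + b * f a
      rw [hmul a b]; ring)

private lemma coe_toDerAux {K : Type*} [Field K] [CharZero K] (f : K → K)
    (hadd : ∀ a b : K, f (a + b) = f a + f b)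
    (hmul : ∀ a b : K, f (a * b) = f a * b + a * f b) :
    ⇑(toDerAux f hadd hmul) = f := rfl

/-- Let `K` be a field of characteristic zero and `v, ∂ : K → K` two
commuting derivations.  Let `R₀ ≠ 0` with `v(R₀) = λ·R₀`, let `w ∈ ℚ`, and let `R` satisfy
`v(R) = w·λ·R`.  Then `S = ∂(R) − w·(∂(R₀)/R₀)·R` satisfies `v(S) = w·λ·S`:
the covariant derivative `∇⁰_∂ = ∂ − w·∂(log R₀)` preserves relative invariants of weight `w`. -/
theorem covariant_derivative_preserves_relative_invariants
    {K : Type*} [Field K] [CharZero K]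
    (v d : K → K)
    (hv_add : ∀ a b : K, v (a + b) = v a + v b)
    (hv_mul : ∀ a b : K, v (a * b) = v a * b + a * v b)
    (hd_add : ∀ a b : K, d (a + b) = d a + d b)
    (hd_mul : ∀ a b : K, d (a * b) = d a * b + a * d b)
    (hcomm : ∀ a : K, v (d a) = d (v a))
    (R₀ : K) (hR₀ : R₀ ≠ 0) (lam : K) (h₀ : v R₀ = lam * R₀)
    (w : ℚ) (R : K) (hR : v R = (w : K) * lam * R) :
    v (d R - (w : K) * (d R₀ / R₀) * R)
      = (w : K) * lam * (d R - (w : K) * (d R₀ / R₀) * R) := by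
  set V := toDerAux v hv_add hv_mul with hV
  set D := toDerAux d hd_add hd_mul with hD
  have hVc : ⇑V = v := rfl
  have hDc : ⇑D = d := rfl
  -- derivations kill rational constants
  have hw_v : v ((w : K)) = 0 := by
    have := V.map_algebraMap (R := ℚ) w
    rwa [eq_ratCast (algebraMap ℚ K) w, hVc] at this
  have hw_d : d ((w : K)) = 0 := by
    have := D.map_algebraMap (R := ℚ) w
    rwa [eq_ratCast (algebraMap ℚ K) w, hDc] at this
  -- v(dR₀)
  have e0 : v (d R₀) = d lam * R₀ + lam * d R₀ := by
    rw [hcomm, h₀, hd_mul]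
  -- v(dR)
  have e1 : v (d R) = (w : K) * (d lam * R + lam * d R) := by
    rw [hcomm, hR, hd_mul, hd_mul, hw_d]; ring
  -- v(dR₀/R₀) = d lam
  have e2 : v (d R₀ / R₀) = d lam := by
    have := V.leibniz_div (d R₀) R₀
    rw [hVc, smul_eq_mul, smul_eq_mul, smul_eq_mul] at this
    rw [this, e0, h₀]
    field_simp
    ring
  -- v of subtraction
  have hsub : ∀ a b : K, v (a - b) = v a - v b := by
    intro a b
    have := V.map_sub a b
    rwa [hVc] at this
  rw [hsub, e1, hv_mul, hv_mul, hw_v, e2, hR]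
  field_simp
  ring
end

section
/- Let K be a field of characteristic zero, let v, ∂ : K → K be two commuting derivations (v ∘ ∂ = ∂ ∘ v), let s be a natural number, and let R₁, …, R_s ∈ K be nonzero elements with v(R_i) = λ_i·R_i for some λ_i ∈ K (i = 1, …, s). Let w₁, …, w_s ∈ ℚ and let R ∈ K satisfy v(R) = (Σᵢ wᵢ·λᵢ)·R (with the rational numbers wᵢ regarded as elements of K). Then the element S = ∂(R) − (Σᵢ wᵢ·∂(R_i)/R_i)·R satisfies v(S) = (Σᵢ wᵢ·λᵢ)·S. That is, the operator ∇^w_∂ = ∂ − ∂(log(R₁^{w₁}⋯R_s^{w_s})) preserves the space of relative invariants of weight w = (w₁, …, w_s). -/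
set_option linter.unusedSectionVars false

section Aux
variable {K : Type*} [Field K] [CharZero K] (v : K → K)

lemma aux_zero (hadd : ∀ a b : K, v (a + b) = v a + v b) : v 0 = 0 := by
  have h := hadd 0 0
  rw [add_zero] at h
  exact (left_eq_add.mp h)

lemma aux_one (hmul : ∀ a b : K, v (a * b) = v a * b + a * v b) : v 1 = 0 := by
  have h := hmul 1 1
  rw [mul_one, mul_one, one_mul] at h
  exact (left_eq_add.mp h)

lemma aux_neg (hadd : ∀ a b : K, v (a + b) = v a + v b) (a : K) : v (-a) = - v a := by
  have h := hadd a (-a)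
  rw [add_neg_cancel, aux_zero v hadd] at h
  exact eq_neg_of_add_eq_zero_right h.symm

lemma aux_sub (hadd : ∀ a b : K, v (a + b) = v a + v b) (a b : K) :
    v (a - b) = v a - v b := by
  rw [sub_eq_add_neg, hadd, aux_neg v hadd, sub_eq_add_neg]

lemma aux_nat (hadd : ∀ a b : K, v (a + b) = v a + v b)
    (hmul : ∀ a b : K, v (a * b) = v a * b + a * v b) (n : ℕ) : v (n : K) = 0 := by
  induction n with
  | zero => simpa using aux_zero v hadd
  | succ n ih =>
      push_cast
      rw [hadd, ih, aux_one v hmul, add_zero]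

lemma aux_int (hadd : ∀ a b : K, v (a + b) = v a + v b)
    (hmul : ∀ a b : K, v (a * b) = v a * b + a * v b) (n : ℤ) : v (n : K) = 0 := by
  rcases n with n | n
  · show v ((n : ℤ) : K) = 0
    rw [Int.cast_natCast]
    exact aux_nat v hadd hmul n
  · have : ((Int.negSucc n : ℤ) : K) = -((n+1 : ℕ) : K) := by push_cast; ring
    rw [this, aux_neg v hadd, aux_nat v hadd hmul, neg_zero]

lemma aux_rat (hadd : ∀ a b : K, v (a + b) = v a + v b)
    (hmul : ∀ a b : K, v (a * b) = v a * b + a * v b) (q : ℚ) : v (q : K) = 0 := by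
  have hden : ((q.den : K)) ≠ 0 := Nat.cast_ne_zero.mpr q.den_nz
  have h1 : ((q.den : K)) * (q : K) = ((q.num : K)) := by
    rw [Rat.cast_def]
    field_simp
  have h2 := hmul ((q.den : K)) (q : K)
  rw [h1, aux_int v hadd hmul, aux_nat v hadd hmul, zero_mul, zero_add] at h2
  exact (mul_eq_zero.mp h2.symm).resolve_left hden

end Aux

/-- Let `K` be a field of characteristic zero, `v, ∂ : K → K` two commuting
derivations, and `R₁, …, R_s ∈ K` nonzero with `v(R_i) = λ_i·R_i`.  Let `w₁, …, w_s ∈ ℚ` and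
let `R` satisfy `v(R) = (Σᵢ wᵢ·λᵢ)·R`.  Then `S = ∂(R) − (Σᵢ wᵢ·∂(R_i)/R_i)·R` satisfies
`v(S) = (Σᵢ wᵢ·λᵢ)·S`: the operator `∇^w_∂ = ∂ − ∂(log(R₁^{w₁}⋯R_s^{w_s}))` preserves the
space of relative invariants of weight `w = (w₁, …, w_s)`. -/
theorem multiweight_covariant_derivative_preserves_relative_invariants
    {K : Type*} [Field K] [CharZero K]
    (v d : K → K)
    (hv_add : ∀ a b : K, v (a + b) = v a + v b)
    (hv_mul : ∀ a b : K, v (a * b) = v a * b + a * v b)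
    (hd_add : ∀ a b : K, d (a + b) = d a + d b)
    (hd_mul : ∀ a b : K, d (a * b) = d a * b + a * d b)
    (hcomm : ∀ a : K, v (d a) = d (v a))
    (s : ℕ) (R : Fin s → K) (hRne : ∀ i, R i ≠ 0) (lam : Fin s → K)
    (hRi : ∀ i, v (R i) = lam i * R i)
    (w : Fin s → ℚ) (P : K)
    (hP : v P = (∑ i, (w i : K) * lam i) * P) :
    v (d P - (∑ i, (w i : K) * (d (R i) / R i)) * P)
      = (∑ i, (w i : K) * lam i) * (d P - (∑ i, (w i : K) * (d (R i) / R i)) * P) := by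
  set L : K := ∑ i, (w i : K) * lam i with hL
  set M : K := ∑ i, (w i : K) * (d (R i) / R i) with hM
  -- additive monoid homs for map_sum
  let fv : K →+ K := ⟨⟨v, aux_zero v hv_add⟩, hv_add⟩
  let fd : K →+ K := ⟨⟨d, aux_zero d hd_add⟩, hd_add⟩
  -- key: v (d Rᵢ / Rᵢ) = d λᵢ
  have hkey : ∀ i, v (d (R i) / R i) = d (lam i) := by
    intro i
    have hb := hRne i
    have h1 : v (d (R i)) = d (lam i) * R i + lam i * d (R i) := by
      rw [hcomm, hRi, hd_mul]
    have h3 := hv_mul (d (R i) / R i) (R i)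
    rw [div_mul_cancel₀ _ hb, hRi, h1] at h3
    have h4 : v (d (R i) / R i) * R i = d (lam i) * R i := by
      have h5 : d (R i) / R i * (lam i * R i) = lam i * d (R i) := by
        field_simp
      rw [h5] at h3
      exact (add_right_cancel h3).symm
    exact mul_right_cancel₀ hb h4
  -- v M = d L
  have hvM : v M = d L := by
    rw [hM, hL]
    rw [show v (∑ i, (w i : K) * (d (R i) / R i)) = fv (∑ i, (w i : K) * (d (R i) / R i)) from rfl,
        show d (∑ i, (w i : K) * lam i) = fd (∑ i, (w i : K) * lam i) from rfl,
        map_sum, map_sum]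
    refine Finset.sum_congr rfl fun i _ => ?_
    show v ((w i : K) * (d (R i) / R i)) = d ((w i : K) * lam i)
    rw [hv_mul, hd_mul, aux_rat v hv_add hv_mul, aux_rat d hd_add hd_mul,
        zero_mul, zero_mul, zero_add, zero_add, hkey]
  have hvdP : v (d P) = d L * P + L * d P := by
    rw [hcomm, hP, hd_mul]
  rw [aux_sub v hv_add, hvdP, hv_mul, hvM, hP]
  ring
end

section
/- Let A = ℂ[y₂, y₃, y₄, …] be the polynomial ring over ℂ in countably many variables y_j (j ≥ 2), let D : A → A be the unique ℂ-derivation with D(y_j) = y_{j+1} for all j ≥ 2 (the truncated total derivative), and for w ∈ ℚ let Δ_w : A → A be the ℂ-linear map Δ_w(P) = y₂·D(P) − (w/3)·y₃·P. Set R₄ = 3·y₂·y₄ − 5·y₃². Then for every w ∈ ℚ and every P ∈ A, the variable y₂ divides the element Δ_{w+4}(Δ_w(P)) + (w·(w+4)/45)·R₄·P in A. -/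
open MvPolynomial

/-- The polynomial ring `A = ℂ[y₂, y₃, y₄, …]` in countably many variables `y_j`, `j ≥ 2`. -/
abbrev JetAlg : Type := MvPolynomial {n : ℕ // 2 ≤ n} ℂ

/-- The variable `y_n` (for `n ≥ 2`). -/
noncomputable def Y (n : ℕ) : JetAlg :=
  if h : 2 ≤ n then X ⟨n, h⟩ else 0

/-- The relative invariant `R₄ = 3·y₂·y₄ − 5·y₃²`. -/
noncomputable def R₄ : JetAlg := 3 * Y 2 * Y 4 - 5 * Y 3 ^ 2

/-- The relative invariant derivation `Δ_w(P) = y₂·D(P) − (w/3)·y₃·P`. -/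
noncomputable def Δ (D : Derivation ℂ JetAlg JetAlg) (w : ℚ) (P : JetAlg) : JetAlg :=
  Y 2 * D P - C ((w / 3 : ℚ) : ℂ) * Y 3 * P

/-- Let `D` be the unique ℂ-derivation of `A = ℂ[y₂, y₃, …]` with
`D(y_j) = y_{j+1}` for all `j ≥ 2`.  Then for every `w ∈ ℚ` and every `P ∈ A`, the variable
`y₂` divides `Δ_{w+4}(Δ_w(P)) + (w·(w+4)/45)·R₄·P` in `A`. -/
theorem y2_divides_iterated_Delta
    (D : Derivation ℂ JetAlg JetAlg)
    (hD : ∀ n : ℕ, 2 ≤ n → D (Y n) = Y (n + 1))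
    (w : ℚ) (P : JetAlg) :
    Y 2 ∣ (Δ D (w + 4) (Δ D w P) + C ((w * (w + 4) / 45 : ℚ) : ℂ) * R₄ * P) := by
  have hC : ∀ a : ℂ, D (MvPolynomial.C a) = 0 := fun a => by
    rw [← MvPolynomial.algebraMap_eq]; exact D.map_algebraMap a
  set c : JetAlg := C ((w / 3 : ℚ) : ℂ) with hc
  set c' : JetAlg := C (((w + 4) / 3 : ℚ) : ℂ) with hc'
  set k : JetAlg := C ((w * (w + 4) / 45 : ℚ) : ℂ) with hk
  have hcc' : c * c' = 5 * k := by
    rw [hc, hc', hk, ← C_mul]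
    rw [show ((5 : JetAlg)) = C (5 : ℂ) from (map_ofNat C 5).symm, ← C_mul]
    congr 1
    push_cast
    ring
  have h1 : D (Δ D w P) = Y 3 * D P + Y 2 * D (D P) - c * (Y 4 * P + Y 3 * D P) := by
    simp only [Δ, ← hc, map_sub, Derivation.leibniz, hC, hD 2 le_rfl, hD 3 (by norm_num)]
    simp only [smul_eq_mul, zero_mul, mul_zero]
    rw [show D c = 0 from hC _]
    ring
  refine ⟨Y 2 * D (D P) + (1 - c - c') * (Y 3 * D P) + (3 * k - c) * (Y 4 * P), ?_⟩
  rw [show Δ D (w + 4) (Δ D w P)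
      = Y 2 * D (Δ D w P) - c' * Y 3 * (Δ D w P) from rfl, h1]
  rw [show (Δ D w P : JetAlg) = Y 2 * D P - c * Y 3 * P from rfl]
  unfold R₄
  linear_combination (Y 3 ^ 2 * P) * hcc'
end

section
/- Let A = ℂ[y₂, y₃, y₄, …] be the polynomial ring over ℂ in countably many variables y_j (j ≥ 2), let D : A → A be the unique ℂ-derivation with D(y_j) = y_{j+1} for all j ≥ 2 (the truncated total derivative), and for w ∈ ℚ let Δ_w : A → A be the ℂ-linear map Δ_w(P) = y₂·D(P) − (w/3)·y₃·P. Set R₄ = 3·y₂·y₄ − 5·y₃². Then there exists a (necessarily unique) sequence Q indexed by integers i ≥ 2 with values in A such that: Q(2) = R₄; for every i ≥ 3, y₂·Q(i) = Δ_{5i−3}(Δ_{5i−7}(Q(i−1))) + ((5i−7)·(5i−3)/45)·R₄·Q(i−1); and for every i ≥ 2, Q(i) = 3·y₂^{i−1}·y_{2i} + γ_i, where γ_i belongs to the ℂ-subalgebra of A generated by the variables y₂, …, y_{2i−1} (i.e., γ_i does not involve y_{2i} or higher variables). -/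
open MvPolynomial

/-- One step of the recursion. -/
noncomputable def stepQ (D : Derivation ℂ JetAlg JetAlg) (q : ℚ) (P : JetAlg) : JetAlg :=
  Y 2 * D (D P) + C (((13 - 10 * q) / 3 : ℚ) : ℂ) * Y 3 * D P
    + C (((5 * q - 7) * (5 * q - 8) / 15 : ℚ) : ℂ) * Y 4 * P

/-- The sequence `Q`. -/
noncomputable def Qseq (D : Derivation ℂ JetAlg JetAlg) : ℕ → JetAlg
  | 0 => 0
  | 1 => 0
  | 2 => R₄
  | (n + 3) => stepQ D (((n + 3 : ℕ) : ℚ)) (Qseq D (n + 2))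

lemma DC (D : Derivation ℂ JetAlg JetAlg) (c : ℂ) (a : JetAlg) :
    D (C c * a) = C c * D a := by
  rw [← smul_eq_C_mul, ← smul_eq_C_mul, D.map_smul]

/-- The key algebraic identity. -/
lemma key (D : Derivation ℂ JetAlg JetAlg) (h2 : D (Y 2) = Y 3) (h3 : D (Y 3) = Y 4)
    (q : ℚ) (P : JetAlg) :
    Δ D (5 * q - 3) (Δ D (5 * q - 7) P)
      + C (((5 * q - 7) * (5 * q - 3) / 45 : ℚ) : ℂ) * R₄ * P
    = Y 2 * stepQ D q P := by
  have h1 : (C ((((5 * q - 7) / 3 : ℚ)) : ℂ) : JetAlg) + C ((((5 * q - 3) / 3 : ℚ)) : ℂ)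
      + C ((((13 - 10 * q) / 3 : ℚ)) : ℂ) = 1 := by
    rw [← C_add, ← C_add, show ((((5 * q - 7) / 3 : ℚ)) : ℂ) + (((5 * q - 3) / 3 : ℚ) : ℂ)
      + (((13 - 10 * q) / 3 : ℚ) : ℂ) = 1 by push_cast; ring, C_1]
  have h2' : (C ((((5 * q - 7) * (5 * q - 8) / 15 : ℚ)) : ℂ) : JetAlg)
      + C ((((5 * q - 7) / 3 : ℚ)) : ℂ)
      = 3 * C ((((5 * q - 7) * (5 * q - 3) / 45 : ℚ)) : ℂ) := by
    rw [← C_add, show ((((5 * q - 7) * (5 * q - 8) / 15 : ℚ)) : ℂ) + (((5 * q - 7) / 3 : ℚ) : ℂ)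
      = 3 * (((5 * q - 7) * (5 * q - 3) / 45 : ℚ) : ℂ) by push_cast; ring, C_mul, map_ofNat]
  have h3' : (C ((((5 * q - 3) / 3 : ℚ)) : ℂ) : JetAlg) * C ((((5 * q - 7) / 3 : ℚ)) : ℂ)
      = 5 * C ((((5 * q - 7) * (5 * q - 3) / 45 : ℚ)) : ℂ) := by
    rw [← C_mul, show ((((5 * q - 3) / 3 : ℚ)) : ℂ) * (((5 * q - 7) / 3 : ℚ) : ℂ)
      = 5 * (((5 * q - 7) * (5 * q - 3) / 45 : ℚ) : ℂ) by push_cast; ring, C_mul, map_ofNat]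
  have hC0 : ∀ c : ℂ, D (C c : JetAlg) = 0 := fun c =>
    D.map_algebraMap (R := ℂ) c
  simp only [Δ, R₄, stepQ, map_sub, mul_assoc, DC, Derivation.leibniz, smul_eq_mul, h2, h3,
    hC0, mul_zero, zero_mul, add_zero, zero_add, sub_zero]
  linear_combination (-(Y 2 * (Y 3 * D P))) * h1 - (Y 2 * (Y 4 * P)) * h2'
    + (Y 3 * (Y 3 * P)) * h3'

/-- The subalgebra generated by `y₂, …, y_m`. -/
noncomputable abbrev B (m : ℕ) : Subalgebra ℂ JetAlg := Algebra.adjoin ℂ (Y '' Set.Icc 2 m)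

lemma memB {n m : ℕ} (h2 : 2 ≤ n) (hnm : n ≤ m) : Y n ∈ B m :=
  Algebra.subset_adjoin ⟨n, ⟨h2, hnm⟩, rfl⟩

lemma Bmono {m m' : ℕ} (h : m ≤ m') : B m ≤ B m' :=
  Algebra.adjoin_mono (Set.image_mono (Set.Icc_subset_Icc_right h))

lemma DmemB (D : Derivation ℂ JetAlg JetAlg) (hD : ∀ n : ℕ, 2 ≤ n → D (Y n) = Y (n + 1))
    {m : ℕ} {p : JetAlg} (hp : p ∈ B m) : D p ∈ B (m + 1) := by
  refine Algebra.adjoin_induction (fun x hx => ?_) (fun r => ?_)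
    (fun x y hx hy ihx ihy => ?_) (fun x y hx hy ihx ihy => ?_) hp
  · obtain ⟨n, ⟨hn2, hnm⟩, rfl⟩ := hx
    rw [hD n hn2]
    exact memB (by omega) (by omega)
  · rw [Derivation.map_algebraMap]; exact zero_mem _
  · rw [map_add]; exact add_mem ihx ihy
  · rw [Derivation.leibniz, smul_eq_mul, smul_eq_mul]
    exact add_mem (mul_mem (Bmono (Nat.le_succ m) hx) ihy)
      (mul_mem (Bmono (Nat.le_succ m) hy) ihx)

lemma CmemB (c : ℂ) (m : ℕ) : (C c : JetAlg) ∈ B m := by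
  have := (B m).algebraMap_mem c
  simpa [MvPolynomial.algebraMap_eq] using this

lemma d1 (D : Derivation ℂ JetAlg JetAlg) (hD : ∀ n : ℕ, 2 ≤ n → D (Y n) = Y (n + 1))
    (k m : ℕ) (hm : 2 ≤ m) :
    D (Y 2 ^ k * Y m) = Y 2 ^ k * Y (m + 1)
      + (k : JetAlg) * Y 2 ^ (k - 1) * Y 3 * Y m := by
  rw [Derivation.leibniz, Derivation.leibniz_pow, hD 2 le_rfl, hD m hm]
  simp only [smul_eq_mul, nsmul_eq_mul]
  ring

lemma d2 (D : Derivation ℂ JetAlg JetAlg) (hD : ∀ n : ℕ, 2 ≤ n → D (Y n) = Y (n + 1))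
    (k m : ℕ) (hm : 3 ≤ m) :
    ∃ ε ∈ B (m + 1), D (D (Y 2 ^ k * Y m)) = Y 2 ^ k * Y (m + 2) + ε := by
  have hmem : (k : JetAlg) * Y 2 ^ (k - 1) * Y 3 * Y m ∈ B m :=
    mul_mem (mul_mem (mul_mem ((B m).natCast_mem k)
      (pow_mem (memB le_rfl (by omega)) _)) (memB (by omega) hm)) (memB (by omega) le_rfl)
  refine ⟨(k : JetAlg) * Y 2 ^ (k - 1) * Y 3 * Y (m + 1)
      + D ((k : JetAlg) * Y 2 ^ (k - 1) * Y 3 * Y m), ?_, ?_⟩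
  · exact add_mem (mul_mem (mul_mem (mul_mem ((B (m + 1)).natCast_mem k)
      (pow_mem (memB le_rfl (by omega)) _)) (memB (by omega) (by omega)))
      (memB (by omega) le_rfl)) (DmemB D hD hmem)
  · rw [d1 D hD k m (by omega), map_add, d1 D hD k (m + 1) (by omega)]
    ring

/-- Let `D` be the unique ℂ-derivation of `A = ℂ[y₂, y₃, …]` with
`D(y_j) = y_{j+1}` for all `j ≥ 2`.  Then there exists a sequence `Q` (indexed by `i ≥ 2`)
in `A` such that `Q(2) = R₄`; for every `i ≥ 3`,
`y₂·Q(i) = Δ_{5i−3}(Δ_{5i−7}(Q(i−1))) + ((5i−7)·(5i−3)/45)·R₄·Q(i−1)`; and for every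
`i ≥ 2`, `Q(i) = 3·y₂^{i−1}·y_{2i} + γ_i` with `γ_i` in the ℂ-subalgebra generated by
`y₂, …, y_{2i−1}`. -/
theorem exists_Q_sequence
    (D : Derivation ℂ JetAlg JetAlg)
    (hD : ∀ n : ℕ, 2 ≤ n → D (Y n) = Y (n + 1)) :
    ∃ Q : ℕ → JetAlg,
      Q 2 = R₄ ∧
      (∀ i : ℕ, 3 ≤ i →
        Y 2 * Q i =
          Δ D (5 * (i : ℚ) - 3) (Δ D (5 * (i : ℚ) - 7) (Q (i - 1)))
            + C (((5 * (i : ℚ) - 7) * (5 * (i : ℚ) - 3) / 45 : ℚ) : ℂ) * R₄ * Q (i - 1)) ∧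
      (∀ i : ℕ, 2 ≤ i →
        ∃ γ ∈ Algebra.adjoin ℂ (Y '' Set.Icc 2 (2 * i - 1)),
          Q i = 3 * Y 2 ^ (i - 1) * Y (2 * i) + γ) := by
  have h2 : D (Y 2) = Y 3 := hD 2 le_rfl
  have h3 : D (Y 3) = Y 4 := hD 3 (by omega)
  have hC3 : (C (3 : ℂ) : JetAlg) = 3 := map_ofNat _ 3
  refine ⟨Qseq D, rfl, ?_, ?_⟩
  · intro i hi
    obtain ⟨n, rfl⟩ : ∃ n, i = n + 3 := ⟨i - 3, by omega⟩
    exact (key D h2 h3 (((n + 3 : ℕ) : ℚ)) (Qseq D (n + 2))).symm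
  · intro i hi
    induction i, hi using Nat.le_induction with
    | base =>
        refine ⟨-(5 * Y 3 ^ 2), ?_, ?_⟩
        · refine neg_mem (mul_mem ?_ (pow_mem (memB (by norm_num) (by norm_num)) 2))
          have := (B (2 * 2 - 1)).natCast_mem 5
          simpa using this
        · rw [show (2 : ℕ) - 1 = 1 from rfl, show 2 * 2 = 4 from rfl, show Qseq D 2 = R₄ from rfl,
            R₄, pow_one]
          ring
    | succ i hi2 IH =>
        obtain ⟨γ, hγ, hQ⟩ := IH
        obtain ⟨n, rfl⟩ : ∃ n, i = n + 2 := ⟨i - 2, by omega⟩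
        simp only [show 2 * (n + 2) - 1 = 2 * n + 3 from by omega,
          show (n + 2) - 1 = n + 1 from by omega, show 2 * (n + 2) = 2 * n + 4 from by omega]
          at hγ hQ
        simp only [show 2 * (n + 3) - 1 = 2 * n + 5 from by omega,
          show (n + 3) - 1 = n + 2 from by omega, show 2 * (n + 3) = 2 * n + 6 from by omega]
        obtain ⟨ε, hε, hdd⟩ := d2 D hD (n + 1) (2 * n + 4) (by omega)
        simp only [show 2 * n + 4 + 2 = 2 * n + 6 from by omega,
          show 2 * n + 4 + 1 = 2 * n + 5 from by omega] at hdd hε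
        set q : ℚ := ((n + 3 : ℕ) : ℚ) with hq
        have hDP : D (Qseq D (n + 2)) = C 3 * D (Y 2 ^ (n + 1) * Y (2 * n + 4)) + D γ := by
          rw [hQ, show (3 : JetAlg) * Y 2 ^ (n + 1) * Y (2 * n + 4)
            = C 3 * (Y 2 ^ (n + 1) * Y (2 * n + 4)) by rw [hC3]; ring, map_add, DC]
        have hDDP : D (D (Qseq D (n + 2)))
            = C 3 * (Y 2 ^ (n + 1) * Y (2 * n + 6) + ε) + D (D γ) := by
          rw [hDP, map_add, DC, hdd]
        have hQmem : Qseq D (n + 2) ∈ B (2 * n + 4) := by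
          rw [hQ]
          refine add_mem (mul_mem (mul_mem ?_ (pow_mem (memB le_rfl (by omega)) _))
            (memB (by omega) le_rfl)) (Bmono (by omega) hγ)
          have := (B (2 * n + 4)).natCast_mem 3
          simpa using this
        refine ⟨Y 2 * (C 3 * ε + D (D γ))
          + C (((13 - 10 * q) / 3 : ℚ) : ℂ) * Y 3 * D (Qseq D (n + 2))
          + C (((5 * q - 7) * (5 * q - 8) / 15 : ℚ) : ℂ) * Y 4 * Qseq D (n + 2), ?_, ?_⟩
        · refine add_mem (add_mem ?_ ?_) ?_
          · exact mul_mem (memB le_rfl (by omega))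
              (add_mem (mul_mem (CmemB _ _) hε) (DmemB D hD (DmemB D hD hγ)))
          · exact mul_mem (mul_mem (CmemB _ _) (memB (by omega) (by omega)))
              (DmemB D hD hQmem)
          · exact mul_mem (mul_mem (CmemB _ _) (memB (by omega) (by omega)))
              (Bmono (by omega) hQmem)
        · show stepQ D q (Qseq D (n + 2)) = _
          rw [stepQ, hDDP, hC3]
          ring
end

section
/- Let B = ℂ[x, y, y₁, y₂, y₃, y₄] with the five derivations v₁, …, v₅ defined on generators by: v₁(x) = 1 and v₁ vanishes on all other variables; v₂(y) = 1 and v₂ vanishes on all other variables; v₃(y) = x, v₃(y₁) = 1, and v₃ vanishes on all other variables; v₄(x) = y, v₄(y) = 0, v₄(y₁) = −y₁², v₄(y₂) = −3y₁y₂, v₄(y₃) = −4y₁y₃ − 3y₂², v₄(y₄) = −5y₁y₄ − 10y₂y₃; v₅(x) = x, v₅(y) = −y, v₅(y_j) = −(j+1)·y_j for j = 1, 2, 3, 4. (These are the fourth prolongations of the special affine Lie algebra ⟨∂x, ∂y, x∂y, y∂x, x∂x − y∂y⟩ of vector fields on ℂ².) Then R₂ = y₂ and R₄ = 3y₂y₄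 − 5y₃² are relative invariants: v₁(R₂) = v₂(R₂) = v₃(R₂) = 0, v₄(R₂) = −3·y₁·R₂, v₅(R₂) = −3·R₂, and v₁(R₄) = v₂(R₄) = v₃(R₄) = 0, v₄(R₄) = −8·y₁·R₄, v₅(R₄) = −8·R₄. Thus R₂ has weight 3 and R₄ has weight 8. -/
open MvPolynomial

/-- The polynomial ring `B = ℂ[x, y, y₁, y₂, y₃, y₄]`, with variable indices
`0 ↦ x`, `1 ↦ y`, `2 ↦ y₁`, `3 ↦ y₂`, `4 ↦ y₃`, `5 ↦ y₄`. -/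
abbrev B4 : Type := MvPolynomial (Fin 6) ℂ

/-- Let `v₁, …, v₅` be the fourth prolongations of the special affine
algebra `⟨∂x, ∂y, x∂y, y∂x, x∂x − y∂y⟩` on `B = ℂ[x, y, y₁, y₂, y₃, y₄]`, given on
generators as in the hypotheses.  Then `R₂ = y₂` and `R₄ = 3y₂y₄ − 5y₃²` are relative
invariants: `v₁, v₂, v₃` annihilate them, `v₄(R₂) = −3y₁R₂`, `v₅(R₂) = −3R₂`,
`v₄(R₄) = −8y₁R₄`, `v₅(R₄) = −8R₄`; thus `R₂` has weight `3` and `R₄` has weight `8`. -/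
theorem R2_R4_are_relative_invariants
    (v1 v2 v3 v4 v5 : Derivation ℂ B4 B4)
    (hv1 : v1 (X 0) = 1 ∧ v1 (X 1) = 0 ∧ v1 (X 2) = 0 ∧ v1 (X 3) = 0 ∧
      v1 (X 4) = 0 ∧ v1 (X 5) = 0)
    (hv2 : v2 (X 0) = 0 ∧ v2 (X 1) = 1 ∧ v2 (X 2) = 0 ∧ v2 (X 3) = 0 ∧
      v2 (X 4) = 0 ∧ v2 (X 5) = 0)
    (hv3 : v3 (X 0) = 0 ∧ v3 (X 1) = X 0 ∧ v3 (X 2) = 1 ∧ v3 (X 3) = 0 ∧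
      v3 (X 4) = 0 ∧ v3 (X 5) = 0)
    (hv4 : v4 (X 0) = X 1 ∧ v4 (X 1) = 0 ∧ v4 (X 2) = -(X 2 ^ 2) ∧
      v4 (X 3) = -(3 * X 2 * X 3) ∧
      v4 (X 4) = -(4 * X 2 * X 4) - 3 * X 3 ^ 2 ∧
      v4 (X 5) = -(5 * X 2 * X 5) - 10 * X 3 * X 4)
    (hv5 : v5 (X 0) = X 0 ∧ v5 (X 1) = -(X 1) ∧ v5 (X 2) = -(2 * X 2) ∧
      v5 (X 3) = -(3 * X 3) ∧ v5 (X 4) = -(4 * X 4) ∧ v5 (X 5) = -(5 * X 5)) :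
    (v1 (X 3) = 0 ∧ v2 (X 3) = 0 ∧ v3 (X 3) = 0 ∧
      v4 (X 3) = -(3 * X 2 * X 3) ∧ v5 (X 3) = -(3 * X 3)) ∧
    (v1 (3 * X 3 * X 5 - 5 * X 4 ^ 2) = 0 ∧
      v2 (3 * X 3 * X 5 - 5 * X 4 ^ 2) = 0 ∧
      v3 (3 * X 3 * X 5 - 5 * X 4 ^ 2) = 0 ∧
      v4 (3 * X 3 * X 5 - 5 * X 4 ^ 2) = -(8 * X 2 * (3 * X 3 * X 5 - 5 * X 4 ^ 2)) ∧
      v5 (3 * X 3 * X 5 - 5 * X 4 ^ 2) = -(8 * (3 * X 3 * X 5 - 5 * X 4 ^ 2))) := by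

  obtain ⟨h10,h11,h12,h13,h14,h15⟩ := hv1
  obtain ⟨h20,h21,h22,h23,h24,h25⟩ := hv2
  obtain ⟨h30,h31,h32,h33,h34,h35⟩ := hv3
  obtain ⟨h40,h41,h42,h43,h44,h45⟩ := hv4
  obtain ⟨h50,h51,h52,h53,h54,h55⟩ := hv5
  have key : ∀ v : Derivation ℂ B4 B4,
      v (3 * X 3 * X 5 - 5 * X 4 ^ 2) =
        3 * (v (X 3) * X 5 + X 3 * v (X 5)) - 10 * X 4 * v (X 4) := by
    intro v
    have h3 : v (3 * X 3 * X 5) = 3 * (v (X 3) * X 5 + X 3 * v (X 5)) := by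
      have e : (3 : B4) * X 3 * X 5 = (3 : ℂ) • (X 3 * X 5) := by
        rw [smul_eq_C_mul, map_ofNat]; ring
      rw [e, Derivation.map_smul, Derivation.leibniz]
      simp only [smul_eq_C_mul, map_ofNat, smul_eq_mul]; ring
    have h5 : v (5 * X 4 ^ 2) = 10 * X 4 * v (X 4) := by
      have e : (5 : B4) * X 4 ^ 2 = (5 : ℂ) • (X 4 * X 4) := by
        rw [smul_eq_C_mul, map_ofNat]; ring
      rw [e, Derivation.map_smul, Derivation.leibniz]
      simp only [smul_eq_C_mul, map_ofNat, smul_eq_mul]; ring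
    rw [map_sub, h3, h5]
  refine ⟨⟨h13, h23, h33, h43, h53⟩, ?_, ?_, ?_, ?_, ?_⟩ <;>
    rw [key] <;> simp only [h13, h15, h14, h23, h25, h24, h33, h35, h34,
      h43, h45, h44, h53, h55, h54] <;> ring
end
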